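/- Let p, q ∈ [1,∞], f ∈ L^p_loc(ℝ^d), x₀ ∈ ℝ^d, n ∈ ℕ. Suppose there exists a sequence of polynomials (P_j) of degree ≤ n and a sequence (ε_j) ∈ ℓ^q such that 2^{jd/p}σ_j‖f − P_j‖_{L^p(B(x₀,2^{−j}))} ≤ ε_j for all j, where σ is admissible with s̲(σ) > 0 and n = ⌊s̄(σ)⌋. Then (σ_j 2^{jd/p} sup_{|h|≤2^{−j}} ‖Δ_h^{n+1} f‖_{L^p(B_h(x₀,2^{−j}))})_j ∈ ℓ^q, where B_h(x₀,r) = {x : [x, x+(n+1)h] ⊂ B(x₀,r)}. -/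

import Mathlib

open MeasureTheory Filter Metric Topology
open scoped ENNReal NNReal

/-- A sequence of positive reals is admissible if consecutive terms are comparable. -/
def Admissible (σ : ℕ → ℝ) : Prop :=
  (∀ j, 0 < σ j) ∧ ∃ C > (0:ℝ), ∀ j, C⁻¹ * σ j ≤ σ (j + 1) ∧ σ (j + 1) ≤ C * σ j

noncomputable def lowerRatio (σ : ℕ → ℝ) (j : ℕ) : ℝ := ⨅ k : ℕ, σ (j + k) / σ k

noncomputable def upperRatio (σ : ℕ → ℝ) (j : ℕ) : ℝ := ⨆ k : ℕ, σ (j + k) / σ k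

/-- `s` is the lower Boyd index of `σ`. -/
def IsLowerBoyd (σ : ℕ → ℝ) (s : ℝ) : Prop :=
  Filter.Tendsto (fun j : ℕ => Real.logb 2 (lowerRatio σ j) / j) Filter.atTop (nhds s)

/-- `s` is the upper Boyd index of `σ`. -/
def IsUpperBoyd (σ : ℕ → ℝ) (s : ℝ) : Prop :=
  Filter.Tendsto (fun j : ℕ => Real.logb 2 (upperRatio σ j) / j) Filter.atTop (nhds s)

/-- First finite difference with step `h`. -/
def fdiff {E : Type*} [Add E] (h : E) (f : E → ℝ) : E → ℝ := fun x => f (x + h) - f x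

/-- Iterated partial derivative `D^α` of a multivariate polynomial. -/
noncomputable def pderivMulti {d : ℕ} (α : Fin d → ℕ) (P : MvPolynomial (Fin d) ℝ) :
    MvPolynomial (Fin d) ℝ :=
  ((List.finRange d).foldr
    (fun i F => (fun Q => MvPolynomial.pderiv i Q)^[α i] ∘ F) id) P

/-- The `L^p(B(x₀, 2^{-j}))` distance between `f` and a polynomial `P`. -/
noncomputable def errNorm {d : ℕ} (f : EuclideanSpace ℝ (Fin d) → ℝ)
    (P : MvPolynomial (Fin d) ℝ) (p : ℝ≥0∞) (x₀ : EuclideanSpace ℝ (Fin d)) (j : ℕ) : ℝ :=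
  (eLpNorm (fun x => f x - MvPolynomial.eval (fun i => x i) P) p
    (volume.restrict (Metric.ball x₀ ((2:ℝ) ^ (-(j : ℝ)))))).toReal

/-- `f` is locally in `L^p`. -/
def LocMemLp {d : ℕ} (f : EuclideanSpace ℝ (Fin d) → ℝ) (p : ℝ≥0∞) : Prop :=
  ∀ R > (0:ℝ), MemLp f p (volume.restrict (Metric.ball (0 : EuclideanSpace ℝ (Fin d)) R))

/-- The supremum over `|h| ≤ 2^{-j}` of `L^p` norms of the `(n+1)`-st finite difference
of `f` over `B_h(x₀, 2^{-j}) = {x : [x, x+(n+1)h] ⊆ B(x₀, 2^{-j})}`. -/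
noncomputable def diffQuantity {d : ℕ} (f : EuclideanSpace ℝ (Fin d) → ℝ) (p : ℝ≥0∞)
    (n : ℕ) (x₀ : EuclideanSpace ℝ (Fin d)) (j : ℕ) : ℝ :=
  ⨆ h ∈ Metric.closedBall (0 : EuclideanSpace ℝ (Fin d)) ((2:ℝ) ^ (-(j : ℝ))),
    (eLpNorm ((fdiff h)^[n + 1] f) p
      (volume.restrict {x | segment ℝ x (x + (n + 1) • h) ⊆
        Metric.ball x₀ ((2:ℝ) ^ (-(j : ℝ)))})).toReal


section Aux

open Polynomial

noncomputable def pdelta (g : Polynomial ℝ) : Polynomial ℝ := g.comp (X + C 1) - g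

lemma natDegree_pdelta_le {g : Polynomial ℝ} {m : ℕ} (hg : g.natDegree ≤ m + 1) :
    (pdelta g).natDegree ≤ m := by
  rw [pdelta]
  by_cases h0 : g.natDegree = 0
  · obtain ⟨a, rfl⟩ := Polynomial.natDegree_eq_zero.mp h0
    simp
  · have hgne : g ≠ 0 := fun hg0 => h0 (by simp [hg0])
    have hq1 : (X + C (1:ℝ)).natDegree = 1 := natDegree_X_add_C 1
    have hlc : (g.comp (X + C 1)).leadingCoeff = g.leadingCoeff := by
      rw [leadingCoeff_comp (by rw [hq1]; norm_num)]
      have h1 : (X + C (1:ℝ)).leadingCoeff = 1 := monic_X_add_C 1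
      rw [h1, one_pow, mul_one]
    have hcomp_ne : g.comp (X + C 1) ≠ 0 := by
      intro h
      rw [h, leadingCoeff_zero] at hlc
      exact (leadingCoeff_ne_zero.mpr hgne) hlc.symm
    have hdeg : (g.comp (X + C 1)).degree = g.degree := by
      rw [degree_eq_natDegree hcomp_ne, degree_eq_natDegree hgne, natDegree_comp, hq1, mul_one]
    have hlt : (g.comp (X + C 1) - g).degree < g.degree := by
      have := degree_sub_lt hdeg hcomp_ne hlc
      rwa [hdeg] at this
    by_cases hz : g.comp (X + C 1) - g = 0
    · rw [hz]; simp
    · have := natDegree_lt_natDegree hz hlt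
      omega

lemma pdelta_iterate_eq_zero : ∀ (m : ℕ) (g : Polynomial ℝ), g.natDegree ≤ m →
    pdelta^[m + 1] g = 0 := by
  intro m
  induction m with
  | zero =>
    intro g hg
    obtain ⟨a, rfl⟩ := Polynomial.natDegree_eq_zero.mp (Nat.le_zero.mp hg)
    simp [pdelta]
  | succ m IH =>
    intro g hg
    rw [Function.iterate_succ_apply]
    exact IH _ (natDegree_pdelta_le hg)

lemma fdiff_one_eval (g : Polynomial ℝ) :
    fdiff (1:ℝ) (fun t => g.eval t) = fun t => (pdelta g).eval t := by
  funext t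
  simp [fdiff, pdelta, Polynomial.eval_comp]

lemma fdiff_one_iterate_eval : ∀ (m : ℕ) (g : Polynomial ℝ),
    (fdiff (1:ℝ))^[m] (fun t => g.eval t) = fun t => (pdelta^[m] g).eval t := by
  intro m
  induction m with
  | zero => intro g; rfl
  | succ m IH =>
    intro g
    rw [Function.iterate_succ_apply, fdiff_one_eval, IH, ← Function.iterate_succ_apply]

lemma fdiff_transfer {E : Type*} [AddCommGroup E] [Module ℝ E] :
    ∀ (m : ℕ) (F : E → ℝ) (h x : E),
    (fdiff h)^[m] F x = (fdiff (1:ℝ))^[m] (fun t : ℝ => F (x + t • h)) 0 := by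
  intro m
  induction m with
  | zero => intro F h x; simp
  | succ m IH =>
    intro F h x
    rw [Function.iterate_succ_apply, IH]
    have : (fun t : ℝ => fdiff h F (x + t • h)) = fdiff (1:ℝ) (fun t : ℝ => F (x + t • h)) := by
      funext t
      simp only [fdiff, add_smul, one_smul, add_assoc]
    rw [this, ← Function.iterate_succ_apply]

lemma fdiff_iterate_sub {E : Type*} [Add E] (h : E) :
    ∀ (m : ℕ) (F G : E → ℝ),
    (fdiff h)^[m] (fun x => F x - G x) = fun x => (fdiff h)^[m] F x - (fdiff h)^[m] G x := by
  intro m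
  induction m with
  | zero => intro F G; rfl
  | succ m IH =>
    intro F G
    rw [Function.iterate_succ_apply]
    have : fdiff h (fun x => F x - G x) = fun x => fdiff h F x - fdiff h G x := by
      funext x; simp [fdiff]; ring
    rw [this, IH, Function.iterate_succ_apply, Function.iterate_succ_apply]

lemma natDegree_aeval_le' {d : ℕ} (φ : Fin d → Polynomial ℝ) (hφ : ∀ i, (φ i).natDegree ≤ 1)
    (Q : MvPolynomial (Fin d) ℝ) : (MvPolynomial.aeval φ Q).natDegree ≤ Q.totalDegree := by
  rw [MvPolynomial.aeval_def, MvPolynomial.eval₂_eq]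
  apply Polynomial.natDegree_sum_le_of_forall_le
  intro v hv
  calc (algebraMap ℝ ℝ[X] (MvPolynomial.coeff v Q) * ∏ i ∈ v.support, φ i ^ v i).natDegree
      ≤ (algebraMap ℝ ℝ[X] (MvPolynomial.coeff v Q)).natDegree
        + (∏ i ∈ v.support, φ i ^ v i).natDegree := natDegree_mul_le
    _ ≤ 0 + ∑ i ∈ v.support, (φ i ^ v i).natDegree := by
        gcongr
        · exact le_of_eq (natDegree_C _)
        · exact natDegree_prod_le _ _
    _ ≤ ∑ i ∈ v.support, v i := by
        rw [zero_add]
        apply Finset.sum_le_sum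
        intro i _
        calc (φ i ^ v i).natDegree ≤ v i * (φ i).natDegree := natDegree_pow_le
          _ ≤ v i * 1 := by gcongr; exact hφ i
          _ = v i := mul_one _
    _ ≤ Q.totalDegree := MvPolynomial.le_totalDegree hv

lemma eval_aeval_line {d : ℕ} (x h : Fin d → ℝ) (Q : MvPolynomial (Fin d) ℝ) (t : ℝ) :
    (MvPolynomial.aeval (fun i => Polynomial.C (x i) + Polynomial.C (h i) * Polynomial.X) Q).eval t
      = MvPolynomial.eval (fun i => x i + t * h i) Q := by
  induction Q using MvPolynomial.induction_on with
  | C a => simp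
  | add p q hp hq => simp [hp, hq]
  | mul_X p i hp =>
    simp [hp]
    exact Or.inl (mul_comm _ _)

lemma fdiff_iterate_poly_eq_zero {d : ℕ} {Q : MvPolynomial (Fin d) ℝ} {n : ℕ}
    (hQ : Q.totalDegree ≤ n) (h x : EuclideanSpace ℝ (Fin d)) :
    (fdiff h)^[n + 1] (fun y => MvPolynomial.eval (fun i => y i) Q) x = 0 := by
  rw [fdiff_transfer]
  set g : Polynomial ℝ :=
    MvPolynomial.aeval (fun i => Polynomial.C (x i) + Polynomial.C (h i) * Polynomial.X) Q with hg
  have hline : (fun t : ℝ => (fun y : EuclideanSpace ℝ (Fin d) =>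
      MvPolynomial.eval (fun i => y i) Q) (x + t • h)) = fun t => g.eval t := by
    funext t
    rw [hg, eval_aeval_line]
    rfl
  rw [hline, fdiff_one_iterate_eval]
  have hdeg : g.natDegree ≤ n := by
    refine le_trans (natDegree_aeval_le' _ ?_ Q) hQ
    intro i
    calc (Polynomial.C (x i) + Polynomial.C (h i) * Polynomial.X).natDegree
        ≤ max (Polynomial.C (x i)).natDegree (Polynomial.C (h i) * Polynomial.X).natDegree :=
          natDegree_add_le _ _
      _ ≤ 1 := by
          apply max_le
          · simp
          · exact le_trans natDegree_mul_le (by simp)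
  rw [pdelta_iterate_eq_zero n g hdeg]
  simp

lemma key_bound {d : ℕ} (p : ℝ≥0∞) (hp : 1 ≤ p) (n : ℕ)
    (f : EuclideanSpace ℝ (Fin d) → ℝ) (hf : LocMemLp f p)
    (x₀ : EuclideanSpace ℝ (Fin d)) (Q : MvPolynomial (Fin d) ℝ) (hQ : Q.totalDegree ≤ n)
    (j : ℕ) :
    diffQuantity f p n x₀ j ≤ 2 ^ (n+1) * errNorm f Q p x₀ j := by
  set r : ℝ := (2:ℝ) ^ (-(j:ℝ)) with hr_def
  have hr : 0 < r := by positivity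
  set B : Set (EuclideanSpace ℝ (Fin d)) := Metric.ball x₀ r with hB_def
  set g : EuclideanSpace ℝ (Fin d) → ℝ :=
    fun x => f x - MvPolynomial.eval (fun i => x i) Q with hg_def
  have hmemg : MemLp g p (volume.restrict B) := by
    have hfB : MemLp f p (volume.restrict B) := by
      refine (hf (‖x₀‖ + r) (by positivity)).mono_measure
        (Measure.restrict_mono (fun x hx => ?_) le_rfl)
      have : dist x x₀ < r := hx
      calc dist x 0 ≤ dist x x₀ + dist x₀ 0 := dist_triangle _ _ _
        _ < r + ‖x₀‖ := by
            rw [dist_zero_right]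
            exact add_lt_add_of_lt_of_le this le_rfl
        _ = ‖x₀‖ + r := add_comm _ _
    have hcont : Continuous (fun x : EuclideanSpace ℝ (Fin d) =>
        MvPolynomial.eval (fun i => x i) Q) := by
      have h1 : Continuous (fun v : Fin d → ℝ => MvPolynomial.eval v Q) :=
        MvPolynomial.continuous_eval Q
      have h2 : Continuous (fun x : EuclideanSpace ℝ (Fin d) => (fun i => x i : Fin d → ℝ)) :=
        PiLp.continuous_ofLp 2 (fun _ : Fin d => ℝ)
      exact h1.comp h2
    haveI : IsFiniteMeasure (volume.restrict B) :=
      ⟨by rw [Measure.restrict_apply_univ]; exact measure_ball_lt_top⟩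
    obtain ⟨C, hC⟩ := (isCompact_closedBall x₀ r).exists_bound_of_continuousOn
      hcont.continuousOn
    have hmemQ : MemLp (fun x : EuclideanSpace ℝ (Fin d) =>
        MvPolynomial.eval (fun i => x i) Q) p (volume.restrict B) := by
      refine MemLp.of_bound hcont.aestronglyMeasurable C ?_
      refine (ae_restrict_iff' measurableSet_ball).2 (ae_of_all _ (fun x hx => ?_))
      exact hC x (ball_subset_closedBall hx)
    exact hfB.sub hmemQ
  have hgm : AEStronglyMeasurable g (volume.restrict B) := hmemg.aestronglyMeasurable
  set E : ℝ≥0∞ := eLpNorm g p (volume.restrict B) with hE_def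
  have hE : E ≠ ∞ := hmemg.eLpNorm_ne_top
  have hRHS : (0:ℝ) ≤ 2 ^ (n+1) * errNorm f Q p x₀ j := by
    have : (0:ℝ) ≤ errNorm f Q p x₀ j := ENNReal.toReal_nonneg
    positivity
  refine Real.iSup_le (fun h => Real.iSup_le (fun hh => ?_) hRHS) hRHS
  set S : Set (EuclideanSpace ℝ (Fin d)) :=
    {x | segment ℝ x (x + (n + 1) • h) ⊆ Metric.ball x₀ r} with hS_def
  have hS_sub : ∀ x ∈ S, ∀ k : ℕ, k ≤ n + 1 → x + k • h ∈ B := by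
    intro x hx k hk
    apply hx
    rw [segment_eq_image']
    refine ⟨(k : ℝ) / (n + 1), ⟨by positivity, ?_⟩, ?_⟩
    · rw [div_le_one (by positivity)]
      exact_mod_cast hk
    · simp only [add_sub_cancel_left, ← Nat.cast_smul_eq_nsmul ℝ, smul_smul]
      congr 1
      push_cast
      rw [div_mul_cancel₀ _ (by positivity : ((n:ℝ)+1) ≠ 0)]
  have main : ∀ m : ℕ, ∀ l : ℕ, l + m ≤ n + 1 →
      AEStronglyMeasurable (fun x => (fdiff h)^[m] g (x + l • h)) (volume.restrict S) ∧
      eLpNorm (fun x => (fdiff h)^[m] g (x + l • h)) p (volume.restrict S)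
        ≤ 2 ^ m * E := by
    intro m
    induction m with
    | zero =>
      intro l hl
      have hT : MeasurePreserving (· + l • h)
          (volume : Measure (EuclideanSpace ℝ (Fin d))) volume :=
        measurePreserving_add_right volume (l • h)
      have hTP : MeasurePreserving (· + l • h)
          (volume.restrict ((· + l • h) ⁻¹' B)) (volume.restrict B) :=
        hT.restrict_preimage measurableSet_ball
      have hSB : S ⊆ (· + l • h) ⁻¹' B := fun x hx => hS_sub x hx l (by omega)
      have hle : volume.restrict S ≤ volume.restrict ((· + l • h) ⁻¹' B) :=
        Measure.restrict_mono hSB le_rfl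
      constructor
      · exact (hgm.comp_measurePreserving hTP).mono_measure hle
      · calc eLpNorm (fun x => (fdiff h)^[0] g (x + l • h)) p (volume.restrict S)
            ≤ eLpNorm (g ∘ (· + l • h)) p (volume.restrict ((· + l • h) ⁻¹' B)) :=
              eLpNorm_mono_measure _ hle
          _ = eLpNorm g p (volume.restrict B) := eLpNorm_comp_measurePreserving hgm hTP
          _ ≤ 2 ^ 0 * E := by rw [pow_zero, one_mul]
    | succ m IH =>
      intro l hl
      obtain ⟨IH1a, IH1b⟩ := IH (l + 1) (by omega)
      obtain ⟨IH0a, IH0b⟩ := IH l (by omega)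
      have hfun : (fun x => (fdiff h)^[m+1] g (x + l • h))
          = (fun x => (fdiff h)^[m] g (x + (l+1) • h))
            - (fun x => (fdiff h)^[m] g (x + l • h)) := by
        funext x
        rw [Function.iterate_succ_apply']
        simp only [Pi.sub_apply, fdiff, succ_nsmul, ← add_assoc]
      constructor
      · rw [hfun]; exact IH1a.sub IH0a
      · rw [hfun]
        calc eLpNorm _ p (volume.restrict S)
            ≤ eLpNorm (fun x => (fdiff h)^[m] g (x + (l+1) • h)) p (volume.restrict S)
              + eLpNorm (fun x => (fdiff h)^[m] g (x + l • h)) p (volume.restrict S) :=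
              eLpNorm_sub_le IH1a IH0a hp
          _ ≤ 2 ^ m * E + 2 ^ m * E := add_le_add IH1b IH0b
          _ = 2 ^ (m+1) * E := by rw [← two_mul, ← mul_assoc, mul_comm 2, ← pow_succ]
  obtain ⟨_, hmain⟩ := main (n+1) 0 (by omega)
  have hfg : (fdiff h)^[n+1] f = fun x => (fdiff h)^[n+1] g (x + 0 • h) := by
    funext x
    have h1 := fdiff_iterate_sub h (n+1) f (fun y => MvPolynomial.eval (fun i => y i) Q)
    have h2 := fdiff_iterate_poly_eq_zero hQ h x
    have : (fdiff h)^[n+1] g x = (fdiff h)^[n+1] f x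
        - (fdiff h)^[n+1] (fun y => MvPolynomial.eval (fun i => y i) Q) x := by
      rw [hg_def, h1]
    rw [zero_smul, add_zero, this, h2, sub_zero]
  have hbound : eLpNorm ((fdiff h)^[n+1] f) p (volume.restrict S) ≤ 2 ^ (n+1) * E := by
    rw [hfg]; exact hmain
  have hfin : (2:ℝ≥0∞) ^ (n+1) * E ≠ ∞ :=
    ENNReal.mul_ne_top (by simp) hE
  calc (eLpNorm ((fdiff h)^[n + 1] f) p (volume.restrict S)).toReal
      ≤ ((2:ℝ≥0∞) ^ (n+1) * E).toReal := ENNReal.toReal_mono hfin hbound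
    _ = 2 ^ (n+1) * errNorm f Q p x₀ j := by
        rw [ENNReal.toReal_mul, ENNReal.toReal_pow, ENNReal.toReal_ofNat]
        rfl

lemma memℓp_of_nonneg_of_le {q : ℝ≥0∞} (hq : 1 ≤ q) {a b : ℕ → ℝ} (hb : Memℓp b q)
    (h0 : ∀ j, 0 ≤ a j) (hab : ∀ j, a j ≤ b j) : Memℓp a q := by
  have hq0 : q ≠ 0 := (lt_of_lt_of_le zero_lt_one hq).ne'
  have habs : ∀ j, ‖a j‖ ≤ ‖b j‖ := fun j => by
    rw [Real.norm_of_nonneg (h0 j)]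
    exact (hab j).trans (le_abs_self _)
  rcases eq_or_ne q ∞ with rfl | hq'
  · obtain ⟨C, hC⟩ := hb.bddAbove
    refine memℓp_infty ⟨C, ?_⟩
    rintro _ ⟨j, rfl⟩
    exact (habs j).trans (hC ⟨j, rfl⟩)
  · have ht : 0 < q.toReal := ENNReal.toReal_pos hq0 hq'
    refine memℓp_gen ?_
    refine Summable.of_nonneg_of_le (fun j => ?_) (fun j => ?_) (hb.summable ht)
    · positivity
    · exact Real.rpow_le_rpow (norm_nonneg _) (habs j) ht.le

end Aux

/-- polynomial approximation implies the finite-difference condition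
defining `T^σ_{p,q}(x₀)`. -/
theorem poly_approx_implies_finite_difference (d : ℕ) (p q : ℝ≥0∞)
    (hp : 1 ≤ p) (hq : 1 ≤ q)
    (f : EuclideanSpace ℝ (Fin d) → ℝ) (hf : LocMemLp f p)
    (x₀ : EuclideanSpace ℝ (Fin d)) (σ : ℕ → ℝ) (hσ : Admissible σ)
    (sl su : ℝ) (hl : IsLowerBoyd σ sl) (hu : IsUpperBoyd σ su) (hsl : 0 < sl)
    (n : ℕ) (hn : n = Nat.floor su)
    (P : ℕ → MvPolynomial (Fin d) ℝ) (hdeg : ∀ j, (P j).totalDegree ≤ n)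
    (ε : ℕ → ℝ) (hε : Memℓp ε q)
    (hb : ∀ j : ℕ, σ j * (2:ℝ) ^ ((j : ℝ) * d / p.toReal) * errNorm f (P j) p x₀ j ≤ ε j) :
    Memℓp (fun j : ℕ =>
      σ j * (2:ℝ) ^ ((j : ℝ) * d / p.toReal) * diffQuantity f p n x₀ j) q := by
  have hkey : ∀ j, diffQuantity f p n x₀ j ≤ 2 ^ (n+1) * errNorm f (P j) p x₀ j :=
    fun j => key_bound p hp n f hf x₀ (P j) (hdeg j) j
  refine memℓp_of_nonneg_of_le hq (hε.const_mul ((2:ℝ)^(n+1))) (fun j => ?_) (fun j => ?_)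
  · have h1 : 0 < σ j := hσ.1 j
    have h2 : (0:ℝ) < (2:ℝ) ^ ((j:ℝ) * d / p.toReal) := Real.rpow_pos_of_pos two_pos _
    have h3 : 0 ≤ diffQuantity f p n x₀ j :=
      Real.iSup_nonneg fun h => Real.iSup_nonneg fun _ => ENNReal.toReal_nonneg
    positivity
  · have hc : (0:ℝ) ≤ σ j * (2:ℝ) ^ ((j:ℝ) * d / p.toReal) :=
      mul_nonneg (hσ.1 j).le (Real.rpow_pos_of_pos two_pos _).le
    have hen : (0:ℝ) ≤ errNorm f (P j) p x₀ j := ENNReal.toReal_nonneg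
    calc σ j * (2:ℝ) ^ ((j:ℝ) * d / p.toReal) * diffQuantity f p n x₀ j
        ≤ σ j * (2:ℝ) ^ ((j:ℝ) * d / p.toReal) * (2 ^ (n+1) * errNorm f (P j) p x₀ j) :=
          mul_le_mul_of_nonneg_left (hkey j) hc
      _ = 2 ^ (n+1) * (σ j * (2:ℝ) ^ ((j:ℝ) * d / p.toReal) * errNorm f (P j) p x₀ j) := by
          ring
      _ ≤ 2 ^ (n+1) * ε j := mul_le_mul_of_nonneg_left (hb j) (by positivity)
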